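/- arXiv:0806.1879 — 2 statements merged into one kernel-verified Lean document; each statement's English description precedes it below -/
import Mathlib

section
/- If two skew diagrams λ/μ and α/β have equal skew Schur functions, then they have the same multiset of row lengths (parts). -/
open YoungDiagram
open scoped Classical

namespace LRSkew

/-- The cells of the skew diagram `lam/mu`. -/
def skewCells (lam mu : YoungDiagram) : Finset (ℕ × ℕ) := lam.cells \ mu.cells

/-- A semistandard filling of the skew shape `lam/mu`: entries are positive exactly on the
cells of the shape, rows are weakly increasing and columns are strictly increasing. -/
def IsSSYT (lam mu : YoungDiagram) (T : ℕ × ℕ → ℕ) : Prop :=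
  (∀ p, p ∈ skewCells lam mu ↔ T p ≠ 0) ∧
  (∀ i j1 j2, (i, j1) ∈ skewCells lam mu → (i, j2) ∈ skewCells lam mu → j1 ≤ j2 →
    T (i, j1) ≤ T (i, j2)) ∧
  (∀ i1 i2 j, (i1, j) ∈ skewCells lam mu → (i2, j) ∈ skewCells lam mu → i1 < i2 →
    T (i1, j) < T (i2, j))

/-- The number of entries equal to `k` among the cells read (in the reverse reading word:
right to left along rows, top row first) up to position `(i,j)`. -/
def prefixCount (lam mu : YoungDiagram) (T : ℕ × ℕ → ℕ) (i j k : ℕ) : ℕ :=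
  ((skewCells lam mu).filter fun p => (p.1 < i ∨ (p.1 = i ∧ j ≤ p.2)) ∧ T p = k).card

/-- The reverse reading word of the filling is a lattice word. -/
def IsLattice (lam mu : YoungDiagram) (T : ℕ × ℕ → ℕ) : Prop :=
  ∀ i j k, prefixCount lam mu T i j (k + 2) ≤ prefixCount lam mu T i j (k + 1)

/-- The number of entries of the filling equal to `k`. -/
def content (lam mu : YoungDiagram) (T : ℕ × ℕ → ℕ) (k : ℕ) : ℕ :=
  ((skewCells lam mu).filter fun p => T p = k).card

/-- A Littlewood–Richardson tableau of shape `lam/mu` and content `nu`. -/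
def IsLR (lam mu nu : YoungDiagram) (T : ℕ × ℕ → ℕ) : Prop :=
  IsSSYT lam mu T ∧ IsLattice lam mu T ∧ ∀ i, content lam mu T (i + 1) = nu.rowLen i

/-- The Littlewood–Richardson coefficient `c(lam; mu, nu)`. -/
noncomputable def lrCoeff (lam mu nu : YoungDiagram) : ℕ :=
  if mu ≤ lam then {T : ℕ × ℕ → ℕ | IsLR lam mu nu T}.ncard else 0

/-- Equality of the skew Schur functions `s_{lam/mu} = s_{alp/bet}`, expressed through
their expansions into Schur functions. -/
def SchurEq (lam mu alp bet : YoungDiagram) : Prop :=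
  ∀ nu : YoungDiagram, lrCoeff lam mu nu = lrCoeff alp bet nu

/-- The rectangular Young diagram `(k^l)` with `l` rows of length `k`. -/
def rect (k l : ℕ) : YoungDiagram :=
  ⟨Finset.range l ×ˢ Finset.range k, by
    intro a b hba ha
    simp only [Finset.coe_product, Set.mem_prod, Finset.mem_coe, Finset.mem_range] at ha ⊢
    exact ⟨lt_of_le_of_lt hba.1 ha.1, lt_of_le_of_lt hba.2 ha.2⟩⟩

/-- The complement of `nu` in the rectangle `(k^l)`, rotated by 180 degrees so that it is
again a partition: its parts are `(k - nu_l, …, k - nu_1)`. -/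
def complRect (k l : ℕ) (nu : YoungDiagram) : YoungDiagram :=
  ⟨(rect k l).cells.filter fun p => (l - 1 - p.1, k - 1 - p.2) ∉ nu, by
    intro a b hba ha
    simp only [Finset.coe_filter, Set.mem_setOf_eq, mem_cells] at ha ⊢
    refine ⟨(rect k l).isLowerSet hba ha.1, fun hmem => ha.2 ?_⟩
    exact nu.isLowerSet
      (Prod.mk_le_mk.mpr ⟨Nat.sub_le_sub_left hba.1 _, Nat.sub_le_sub_left hba.2 _⟩) hmem⟩

/-- The staircase partition `(n, n-1, …, 2, 1)`. -/
def staircase (n : ℕ) : YoungDiagram :=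
  ⟨(Finset.range n ×ˢ Finset.range n).filter fun p => p.1 + p.2 < n, by
    intro a b hba ha
    simp only [Finset.coe_filter, Set.mem_setOf_eq, Finset.mem_product, Finset.mem_range] at ha ⊢
    exact ⟨⟨lt_of_le_of_lt hba.1 ha.1.1, lt_of_le_of_lt hba.2 ha.1.2⟩,
      lt_of_le_of_lt (Nat.add_le_add hba.1 hba.2) ha.2⟩⟩

/-- A basic skew diagram: no empty rows and no empty columns. -/
def IsBasic (lam mu : YoungDiagram) : Prop :=
  (∀ i, i < lam.colLen 0 → mu.rowLen i < lam.rowLen i) ∧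
  (∀ j, j < lam.rowLen 0 → mu.colLen j < lam.colLen j)

/-- A (basic) skew diagram is connected iff consecutive rows share a column. -/
def IsConnectedSkew (lam mu : YoungDiagram) : Prop :=
  ∀ i, i + 1 < lam.colLen 0 → mu.rowLen i < lam.rowLen (i + 1)

/-- The number of distinct (positive) part sizes of a partition. -/
def dp (lam : YoungDiagram) : ℕ :=
  ((Finset.range (lam.colLen 0)).image fun i => lam.rowLen i).card

/-- A partition is a rectangle: all its parts are equal. -/
def IsRect (mu : YoungDiagram) : Prop :=
  ∀ i, i < mu.colLen 0 → mu.rowLen i = mu.rowLen 0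

/-- Cells of a skew diagram in the same connected component: the reflexive–transitive
closure of sharing a row or a column. -/
def SameComp (s : Finset (ℕ × ℕ)) : ℕ × ℕ → ℕ × ℕ → Prop :=
  Relation.ReflTransGen fun a b => a ∈ s ∧ b ∈ s ∧ (a.1 = b.1 ∨ a.2 = b.2)

/-- Two finite sets of boxes agree up to translation or 180°-rotation of each connected
component independently. -/
def UpToTransRot (s t : Finset (ℕ × ℕ)) : Prop :=
  ∃ f : ℕ × ℕ → ℕ × ℕ, Set.BijOn f ↑s ↑t ∧
    ∀ p ∈ s, ∀ q ∈ s, SameComp s p q →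
      (((f q).1 : ℤ) - (f p).1 = (q.1 : ℤ) - p.1 ∧ ((f q).2 : ℤ) - (f p).2 = (q.2 : ℤ) - p.2) ∨
      (((f q).1 : ℤ) - (f p).1 = (p.1 : ℤ) - q.1 ∧ ((f q).2 : ℤ) - (f p).2 = (p.2 : ℤ) - q.2)


/-! ### Auxiliary development for Statement 4 -/

section Aux

private lemma mem_skew {lam mu : YoungDiagram} {p : ℕ × ℕ} :
    p ∈ skewCells lam mu ↔ mu.rowLen p.1 ≤ p.2 ∧ p.2 < lam.rowLen p.1 := by
  obtain ⟨i, j⟩ := p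
  simp only [skewCells, Finset.mem_sdiff, mem_cells, mem_iff_lt_rowLen]
  omega

private lemma rowLen_zero_of_le {lam : YoungDiagram} {i : ℕ} (h : lam.colLen 0 ≤ i) :
    lam.rowLen i = 0 := by
  by_contra hc
  have h1 : (i, 0) ∈ lam := mem_iff_lt_rowLen.mpr (Nat.pos_of_ne_zero hc)
  have h2 := mem_iff_lt_colLen.mp h1
  omega

private lemma fst_lt_colLen {lam mu : YoungDiagram} {p : ℕ × ℕ}
    (hp : p ∈ skewCells lam mu) : p.1 < lam.colLen 0 := by
  have h1 := mem_skew.mp hp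
  have h2 : (p.1, p.2) ∈ lam := mem_iff_lt_rowLen.mpr h1.2
  have h3 : (p.1, 0) ∈ lam := lam.up_left_mem le_rfl (Nat.zero_le _) h2
  exact mem_iff_lt_colLen.mp h3

/-- `F nu k = ∑_v min(nu_v, k)`. -/
private def F (nu : YoungDiagram) (k : ℕ) : ℕ :=
  ∑ v ∈ Finset.range (nu.colLen 0), min (nu.rowLen v) k

/-- `G lam mu k = ∑_i min(lam_i - mu_i, k)`. -/
private def G (lam mu : YoungDiagram) (k : ℕ) : ℕ :=
  ∑ i ∈ Finset.range (lam.colLen 0), min (lam.rowLen i - mu.rowLen i) k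

private lemma pc_chain {lam mu : YoungDiagram} {T : ℕ × ℕ → ℕ} (hlat : IsLattice lam mu T)
    {u w : ℕ} (hu : 1 ≤ u) (huw : u ≤ w) (i j : ℕ) :
    prefixCount lam mu T i j w ≤ prefixCount lam mu T i j u := by
  induction w, huw using Nat.le_induction with
  | base => exact le_rfl
  | succ w hw ih =>
    obtain ⟨w', rfl⟩ : ∃ w', w = w' + 1 := ⟨w - 1, by omega⟩
    exact le_trans (hlat i j w') ih

/-- The minimality half: for any LR filling, `F nu ≤ G lam mu`. -/
private lemma F_le_G {lam mu nu : YoungDiagram} {T : ℕ × ℕ → ℕ}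
    (hT : IsLR lam mu nu T) (k : ℕ) : F nu k ≤ G lam mu k := by
  classical
  obtain ⟨⟨hsupp, hrow, hcol⟩, hlat, hcont⟩ := hT
  set rk : ℕ × ℕ → ℕ := fun p => prefixCount lam mu T p.1 p.2 (T p) with hrk
  have hTpos : ∀ p ∈ skewCells lam mu, 0 < T p :=
    fun p hp => Nat.pos_of_ne_zero ((hsupp p).mp hp)
  have hself : ∀ p ∈ skewCells lam mu, 0 < rk p := by
    intro p hp
    apply Finset.card_pos.mpr
    exact ⟨p, Finset.mem_filter.mpr ⟨hp, Or.inr ⟨rfl, le_rfl⟩, rfl⟩⟩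
  have hrk_le : ∀ p ∈ skewCells lam mu, rk p ≤ content lam mu T (T p) := by
    intro p hp
    apply Finset.card_le_card
    intro x hx
    simp only [Finset.mem_filter] at hx ⊢
    exact ⟨hx.1, hx.2.2⟩
  -- same value, strictly later in reverse reading order: strictly larger rank
  have hkey : ∀ p q : ℕ × ℕ, p ∈ skewCells lam mu → q ∈ skewCells lam mu → T p = T q →
      (p.1 < q.1 ∨ (p.1 = q.1 ∧ q.2 < p.2)) → rk p < rk q := by
    intro p q hp hq hv hlt
    have hsub : ((skewCells lam mu).filter fun x =>
          (x.1 < p.1 ∨ (x.1 = p.1 ∧ p.2 ≤ x.2)) ∧ T x = T p)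
        ⊆ ((skewCells lam mu).filter fun x =>
          (x.1 < q.1 ∨ (x.1 = q.1 ∧ q.2 ≤ x.2)) ∧ T x = T q) := by
      intro x hx
      simp only [Finset.mem_filter] at hx ⊢
      refine ⟨hx.1, ?_, by rw [hx.2.2, hv]⟩
      have := hx.2.1; omega
    have hmemq : q ∈ (skewCells lam mu).filter fun x =>
        (x.1 < q.1 ∨ (x.1 = q.1 ∧ q.2 ≤ x.2)) ∧ T x = T q :=
      Finset.mem_filter.mpr ⟨hq, Or.inr ⟨rfl, le_rfl⟩, rfl⟩
    have hnmem : q ∉ (skewCells lam mu).filter fun x =>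
        (x.1 < p.1 ∨ (x.1 = p.1 ∧ p.2 ≤ x.2)) ∧ T x = T p := by
      intro hmem
      rw [Finset.mem_filter] at hmem
      rcases hmem with ⟨-, hpos, -⟩
      omega
    exact Finset.card_lt_card ((Finset.ssubset_iff_of_subset hsub).mpr ⟨q, hmemq, hnmem⟩)
  -- within a row: strictly to the left means strictly larger rank
  have hstrict_row : ∀ p q : ℕ × ℕ, p ∈ skewCells lam mu → q ∈ skewCells lam mu →
      p.1 = q.1 → p.2 < q.2 → rk q < rk p := by
    intro p q hp hq h1 h2
    have hu : 0 < T p := hTpos _ hp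
    have hqS : (p.1, q.2) ∈ skewCells lam mu := by rw [h1]; exact hq
    have huv : T p ≤ T q := by
      have := hrow p.1 p.2 q.2 hp hqS (le_of_lt h2)
      have h3 : ((p.1, q.2) : ℕ × ℕ) = q := by rw [h1]
      rwa [h3] at this
    have step1 : rk q ≤ prefixCount lam mu T q.1 q.2 (T p) := pc_chain hlat hu huv _ _
    have step2 : prefixCount lam mu T q.1 q.2 (T p) < rk p := by
      have hsub : ((skewCells lam mu).filter fun x =>
            (x.1 < q.1 ∨ (x.1 = q.1 ∧ q.2 ≤ x.2)) ∧ T x = T p)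
          ⊆ ((skewCells lam mu).filter fun x =>
            (x.1 < p.1 ∨ (x.1 = p.1 ∧ p.2 ≤ x.2)) ∧ T x = T p) := by
        intro x hx
        simp only [Finset.mem_filter] at hx ⊢
        refine ⟨hx.1, ?_, hx.2.2⟩
        have := hx.2.1; omega
      have hmemp : p ∈ (skewCells lam mu).filter fun x =>
          (x.1 < p.1 ∨ (x.1 = p.1 ∧ p.2 ≤ x.2)) ∧ T x = T p :=
        Finset.mem_filter.mpr ⟨hp, Or.inr ⟨rfl, le_rfl⟩, rfl⟩
      have hnmem : p ∉ (skewCells lam mu).filter fun x =>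
          (x.1 < q.1 ∨ (x.1 = q.1 ∧ q.2 ≤ x.2)) ∧ T x = T p := by
        intro hmem
        rw [Finset.mem_filter] at hmem
        rcases hmem with ⟨-, hpos, -⟩
        omega
      exact Finset.card_lt_card ((Finset.ssubset_iff_of_subset hsub).mpr ⟨p, hmemp, hnmem⟩)
    exact lt_of_le_of_lt step1 step2
  -- per-value lower bound
  have count_val : ∀ v, min (content lam mu T (v + 1)) k ≤
      ((skewCells lam mu).filter fun p => rk p ≤ k ∧ T p = v + 1).card := by
    intro v
    have hcard : ((skewCells lam mu).filter fun p => T p = v + 1).card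
        = content lam mu T (v + 1) := rfl
    have hsplit : ((skewCells lam mu).filter fun p => T p = v + 1).card
        = ((skewCells lam mu).filter fun p => rk p ≤ k ∧ T p = v + 1).card
          + ((skewCells lam mu).filter fun p => ¬(rk p ≤ k) ∧ T p = v + 1).card := by
      rw [← Finset.card_union_of_disjoint (by
        rw [Finset.disjoint_left]
        intro a ha hb
        simp only [Finset.mem_filter] at ha hb
        exact hb.2.1 ha.2.1)]
      congr 1
      ext x
      simp only [Finset.mem_union, Finset.mem_filter]
      tauto
    have hbig : ((skewCells lam mu).filter fun p => ¬(rk p ≤ k) ∧ T p = v + 1).card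
        ≤ content lam mu T (v + 1) - k := by
      have hinj : ((skewCells lam mu).filter fun p => ¬(rk p ≤ k) ∧ T p = v + 1).card
          ≤ (Finset.Icc (k + 1) (content lam mu T (v + 1))).card := by
        apply Finset.card_le_card_of_injOn rk
        · intro p hp
          simp only [Finset.mem_coe, Finset.mem_filter] at hp
          have h1 := hrk_le p hp.1
          rw [hp.2.2] at h1
          rw [Finset.mem_coe, Finset.mem_Icc]
          have := hp.2.1
          omega
        · intro p hp q hq hpq
          simp only [Finset.mem_coe, Finset.mem_filter] at hp hq
          by_contra hne
          have hv : T p = T q := by rw [hp.2.2, hq.2.2]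
          have h4 : p.1 < q.1 ∨ (p.1 = q.1 ∧ q.2 < p.2) ∨ q.1 < p.1 ∨ (q.1 = p.1 ∧ p.2 < q.2) := by
            have hne2 : ¬(p.1 = q.1 ∧ p.2 = q.2) := by
              intro hcon
              exact hne (Prod.ext_iff.mpr hcon)
            omega
          rcases h4 with h | h | h | h
          · exact absurd hpq (Nat.ne_of_lt (hkey p q hp.1 hq.1 hv (Or.inl h)))
          · exact absurd hpq (Nat.ne_of_lt (hkey p q hp.1 hq.1 hv (Or.inr h)))
          · exact absurd hpq (Nat.ne_of_gt (hkey q p hq.1 hp.1 hv.symm (Or.inl h)))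
          · exact absurd hpq (Nat.ne_of_gt (hkey q p hq.1 hp.1 hv.symm (Or.inr h)))
      rw [Nat.card_Icc] at hinj
      omega
    omega
  -- per-row upper bound
  have count_row : ∀ i, ((skewCells lam mu).filter fun p => rk p ≤ k ∧ p.1 = i).card
      ≤ min (lam.rowLen i - mu.rowLen i) k := by
    intro i
    apply le_min
    · have hinj : ((skewCells lam mu).filter fun p => rk p ≤ k ∧ p.1 = i).card
          ≤ (Finset.Ico (mu.rowLen i) (lam.rowLen i)).card := by
        apply Finset.card_le_card_of_injOn (fun p => p.2)
        · intro p hp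
          simp only [Finset.mem_coe, Finset.mem_filter] at hp
          have := mem_skew.mp hp.1
          rw [Finset.mem_coe, Finset.mem_Ico]
          rw [hp.2.2] at this
          exact this
        · intro p hp q hq hpq
          simp only [Finset.mem_coe, Finset.mem_filter] at hp hq
          exact Prod.ext_iff.mpr ⟨by rw [hp.2.2, hq.2.2], hpq⟩
      rwa [Nat.card_Ico] at hinj
    · have hinj : ((skewCells lam mu).filter fun p => rk p ≤ k ∧ p.1 = i).card
          ≤ (Finset.Icc 1 k).card := by
        apply Finset.card_le_card_of_injOn rk
        · intro p hp
          simp only [Finset.mem_coe, Finset.mem_filter] at hp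
          rw [Finset.mem_coe, Finset.mem_Icc]
          exact ⟨hself p hp.1, hp.2.1⟩
        · intro p hp q hq hpq
          simp only [Finset.mem_coe, Finset.mem_filter] at hp hq
          by_contra hne
          have h1 : p.1 = q.1 := by rw [hp.2.2, hq.2.2]
          have h2 : p.2 ≠ q.2 := by
            intro hcon
            exact hne (Prod.ext_iff.mpr ⟨h1, hcon⟩)
          rcases Nat.lt_or_ge p.2 q.2 with h | h
          · exact absurd hpq (Nat.ne_of_gt (hstrict_row p q hp.1 hq.1 h1 h))
          · exact absurd hpq (Nat.ne_of_lt (hstrict_row q p hq.1 hp.1 h1.symm (by omega)))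
      rw [Nat.card_Icc] at hinj
      omega
  -- fiberwise decompositions
  have hA1 : ((skewCells lam mu).filter fun p => rk p ≤ k).card
      = ∑ v ∈ Finset.range (nu.colLen 0 + 1),
          ((skewCells lam mu).filter fun p => rk p ≤ k ∧ T p = v).card := by
    have := Finset.card_eq_sum_card_fiberwise
      (f := fun p => T p) (s := (skewCells lam mu).filter fun p => rk p ≤ k)
      (t := Finset.range (nu.colLen 0 + 1)) ?_
    · rw [this]
      apply Finset.sum_congr rfl
      intro v _
      rw [Finset.filter_filter]
    · intro p hp
      simp only [Finset.mem_coe, Finset.mem_filter] at hp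
      rw [Finset.mem_coe, Finset.mem_range]
      show T p < nu.colLen 0 + 1
      obtain ⟨w, hw⟩ : ∃ w, T p = w + 1 := ⟨T p - 1, by have := hTpos p hp.1; omega⟩
      have hcpos : 0 < content lam mu T (w + 1) :=
        Finset.card_pos.mpr ⟨p, Finset.mem_filter.mpr ⟨hp.1, hw⟩⟩
      rw [hcont w] at hcpos
      have h1 : (w, 0) ∈ nu := mem_iff_lt_rowLen.mpr hcpos
      have h2 := mem_iff_lt_colLen.mp h1
      omega
  have hA2 : ((skewCells lam mu).filter fun p => rk p ≤ k).card
      = ∑ i ∈ Finset.range (lam.colLen 0),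
          ((skewCells lam mu).filter fun p => rk p ≤ k ∧ p.1 = i).card := by
    have := Finset.card_eq_sum_card_fiberwise
      (f := fun p => p.1) (s := (skewCells lam mu).filter fun p => rk p ≤ k)
      (t := Finset.range (lam.colLen 0)) ?_
    · rw [this]
      apply Finset.sum_congr rfl
      intro i _
      rw [Finset.filter_filter]
    · intro p hp
      simp only [Finset.mem_coe, Finset.mem_filter] at hp
      rw [Finset.mem_coe, Finset.mem_range]
      exact fst_lt_colLen hp.1
  have hzero : ((skewCells lam mu).filter fun p => rk p ≤ k ∧ T p = 0).card = 0 := by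
    rw [Finset.card_eq_zero, Finset.filter_eq_empty_iff]
    intro p hp
    have := hTpos p hp
    omega
  calc F nu k = ∑ v ∈ Finset.range (nu.colLen 0), min (content lam mu T (v + 1)) k := by
        apply Finset.sum_congr rfl
        intro v _
        rw [hcont v]
    _ ≤ ∑ v ∈ Finset.range (nu.colLen 0),
          ((skewCells lam mu).filter fun p => rk p ≤ k ∧ T p = v + 1).card :=
        Finset.sum_le_sum fun v _ => count_val v
    _ = ∑ v ∈ Finset.range (nu.colLen 0 + 1),
          ((skewCells lam mu).filter fun p => rk p ≤ k ∧ T p = v).card := by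
        rw [Finset.sum_range_succ']
        rw [hzero, Nat.add_zero]
    _ = ((skewCells lam mu).filter fun p => rk p ≤ k).card := hA1.symm
    _ = ∑ i ∈ Finset.range (lam.colLen 0),
          ((skewCells lam mu).filter fun p => rk p ≤ k ∧ p.1 = i).card := hA2
    _ ≤ ∑ i ∈ Finset.range (lam.colLen 0), min (lam.rowLen i - mu.rowLen i) k :=
        Finset.sum_le_sum fun i _ => count_row i
    _ = G lam mu k := rfl

end Aux

/-! ### The canonical LR filling with content equal to the sorted row lengths -/

/-- `cnt lam mu m t` = number of rows `i < m` of the skew shape with at least `t` cells. -/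
private def cnt (lam mu : YoungDiagram) (m t : ℕ) : ℕ :=
  ((Finset.range m).filter fun i => t ≤ lam.rowLen i - mu.rowLen i).card

private lemma cnt_mono {lam mu : YoungDiagram} {m m' : ℕ} (h : m ≤ m') (t : ℕ) :
    cnt lam mu m t ≤ cnt lam mu m' t := by
  apply Finset.card_le_card
  intro x hx
  simp only [Finset.mem_filter, Finset.mem_range] at hx ⊢
  exact ⟨by omega, hx.2⟩

private lemma cnt_anti (lam mu : YoungDiagram) (m : ℕ) {t t' : ℕ} (h : t ≤ t') :
    cnt lam mu m t' ≤ cnt lam mu m t := by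
  apply Finset.card_le_card
  intro x hx
  simp only [Finset.mem_filter, Finset.mem_range] at hx ⊢
  exact ⟨hx.1, by omega⟩

private lemma cnt_succ (lam mu : YoungDiagram) (m t : ℕ) :
    cnt lam mu (m + 1) t
      = cnt lam mu m t + (if t ≤ lam.rowLen m - mu.rowLen m then 1 else 0) := by
  unfold cnt
  rw [Finset.range_add_one, Finset.filter_insert]
  split_ifs with h
  · rw [Finset.card_insert_of_notMem (by simp)]
  · rw [Nat.add_zero]

private lemma cnt_le (lam mu : YoungDiagram) (m t : ℕ) : cnt lam mu m t ≤ m :=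
  le_trans (Finset.card_filter_le _ _) (by simp)

private lemma cnt_zero (lam mu : YoungDiagram) (t : ℕ) : cnt lam mu 0 t = 0 := by
  simp [cnt]

private lemma cnt_strict {lam mu : YoungDiagram} {i1 i2 t : ℕ} (h : i1 < i2)
    (ht : t ≤ lam.rowLen i2 - mu.rowLen i2) :
    cnt lam mu (i1 + 1) t < cnt lam mu (i2 + 1) t := by
  have h1 : cnt lam mu (i1 + 1) t ≤ cnt lam mu i2 t := cnt_mono (by omega) t
  have h2 := cnt_succ lam mu i2 t
  rw [if_pos ht] at h2
  omega

/-- The canonical filling: cell `(i,j)` receives the number of rows `i' ≤ i` whose length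
is at least `lam_i - j` (the position of `(i,j)` counted from the right end of its row). -/
private def Tstar (lam mu : YoungDiagram) (p : ℕ × ℕ) : ℕ :=
  if p ∈ skewCells lam mu then cnt lam mu (p.1 + 1) (lam.rowLen p.1 - p.2) else 0

/-- `sFun lam mu w` is the `w`-th largest row length of the skew shape. -/
private def sFun (lam mu : YoungDiagram) (w : ℕ) : ℕ :=
  ((Finset.range (lam.rowLen 0)).filter fun c => w ≤ cnt lam mu (lam.colLen 0) (c + 1)).card

private lemma tcode {lam mu : YoungDiagram} {p : ℕ × ℕ} (hp : p ∈ skewCells lam mu) :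
    1 ≤ lam.rowLen p.1 - p.2 ∧
    lam.rowLen p.1 - p.2 ≤ lam.rowLen p.1 - mu.rowLen p.1 ∧
    p.2 = lam.rowLen p.1 - (lam.rowLen p.1 - p.2) := by
  have := mem_skew.mp hp
  omega

private lemma cell_mem {lam mu : YoungDiagram} {i t : ℕ} (h1 : 1 ≤ t)
    (h2 : t ≤ lam.rowLen i - mu.rowLen i) :
    (i, lam.rowLen i - t) ∈ skewCells lam mu := by
  rw [mem_skew]
  simp only
  omega

private lemma Tstar_eq {lam mu : YoungDiagram} {p : ℕ × ℕ} (hp : p ∈ skewCells lam mu) :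
    Tstar lam mu p = cnt lam mu (p.1 + 1) (lam.rowLen p.1 - p.2) := if_pos hp

private lemma Tstar_cell {lam mu : YoungDiagram} {i t : ℕ} (h1 : 1 ≤ t)
    (h2 : t ≤ lam.rowLen i - mu.rowLen i) :
    Tstar lam mu (i, lam.rowLen i - t) = cnt lam mu (i + 1) t := by
  rw [Tstar_eq (cell_mem h1 h2)]
  show cnt lam mu (i + 1) (lam.rowLen i - (lam.rowLen i - t)) = cnt lam mu (i + 1) t
  congr 1
  omega

private lemma Tstar_ssyt (lam mu : YoungDiagram) : IsSSYT lam mu (Tstar lam mu) := by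
  refine ⟨?_, ?_, ?_⟩
  · intro p
    constructor
    · intro hp
      rw [Tstar_eq hp]
      have ht := tcode hp
      have hmem : p.1 ∈ (Finset.range (p.1 + 1)).filter
          (fun i => (lam.rowLen p.1 - p.2) ≤ lam.rowLen i - mu.rowLen i) := by
        simp only [Finset.mem_filter, Finset.mem_range]
        exact ⟨by omega, ht.2.1⟩
      have hpos : 0 < cnt lam mu (p.1 + 1) (lam.rowLen p.1 - p.2) :=
        Finset.card_pos.mpr ⟨p.1, hmem⟩
      omega
    · intro h
      by_contra hp
      exact h (by simp [Tstar, if_neg hp])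
  · intro i j1 j2 h1 h2 hj
    rw [Tstar_eq h1, Tstar_eq h2]
    simp only
    exact cnt_anti lam mu _ (by omega)
  · intro i1 i2 j h1 h2 hi
    rw [Tstar_eq h1, Tstar_eq h2]
    simp only
    have hm1 := mem_skew.mp h1
    have hm2 := mem_skew.mp h2
    simp only at hm1 hm2
    have hanti12 := lam.rowLen_anti i1 i2 (le_of_lt hi)
    have hsub : ((Finset.range (i1 + 1)).filter
          (fun x => (lam.rowLen i1 - j) ≤ lam.rowLen x - mu.rowLen x)) ∪ Finset.Ioc i1 i2
        ⊆ (Finset.range (i2 + 1)).filter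
          (fun x => (lam.rowLen i2 - j) ≤ lam.rowLen x - mu.rowLen x) := by
      intro x hx
      simp only [Finset.mem_union, Finset.mem_filter, Finset.mem_range, Finset.mem_Ioc] at hx ⊢
      rcases hx with ⟨hx1, hx2⟩ | ⟨hx1, hx2⟩
      · exact ⟨by omega, by omega⟩
      · refine ⟨by omega, ?_⟩
        have ha := lam.rowLen_anti x i2 hx2
        have hb := mu.rowLen_anti i1 x (le_of_lt hx1)
        omega
    have hdisj : Disjoint ((Finset.range (i1 + 1)).filter
          (fun x => (lam.rowLen i1 - j) ≤ lam.rowLen x - mu.rowLen x)) (Finset.Ioc i1 i2) := by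
      rw [Finset.disjoint_left]
      intro a ha hb
      simp only [Finset.mem_filter, Finset.mem_range] at ha
      simp only [Finset.mem_Ioc] at hb
      omega
    have hcard := Finset.card_le_card hsub
    rw [Finset.card_union_of_disjoint hdisj, Nat.card_Ioc] at hcard
    have hcard2 : cnt lam mu (i1 + 1) (lam.rowLen i1 - j) + (i2 - i1)
        ≤ cnt lam mu (i2 + 1) (lam.rowLen i2 - j) := hcard
    have : cnt lam mu (i1 + 1) (lam.rowLen i1 - j) = cnt lam mu (i1 + 1) (lam.rowLen i1 - j) := rfl
    omega

/-- discrete intermediate value property for `cnt` in the `m` variable -/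
private lemma cnt_ivt (lam mu : YoungDiagram) (t : ℕ) :
    ∀ m w, w ≤ cnt lam mu m t → ∃ m' ≤ m, cnt lam mu m' t = w := by
  intro m
  induction m with
  | zero =>
    intro w hw
    rw [cnt_zero] at hw
    exact ⟨0, le_rfl, by rw [cnt_zero]; omega⟩
  | succ m ih =>
    intro w hw
    have hs := cnt_succ lam mu m t
    by_cases h : w ≤ cnt lam mu m t
    · obtain ⟨m', hm', he⟩ := ih w h
      exact ⟨m', by omega, he⟩
    · exact ⟨m + 1, le_rfl, by split_ifs at hs <;> omega⟩

private noncomputable def firstm (lam mu : YoungDiagram) (w t : ℕ) : ℕ :=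
  sInf {m | cnt lam mu m t = w}

private lemma firstm_spec {lam mu : YoungDiagram} {w t m0 : ℕ} (hw : 1 ≤ w)
    (hm0 : w ≤ cnt lam mu m0 t) :
    cnt lam mu (firstm lam mu w t) t = w ∧ firstm lam mu w t ≤ m0 ∧
    1 ≤ firstm lam mu w t ∧
    t ≤ lam.rowLen (firstm lam mu w t - 1) - mu.rowLen (firstm lam mu w t - 1) := by
  obtain ⟨m', hm'le, hm'⟩ := cnt_ivt lam mu t m0 w hm0
  have hne : {m | cnt lam mu m t = w}.Nonempty := ⟨m', hm'⟩
  have hmem : cnt lam mu (firstm lam mu w t) t = w := Nat.sInf_mem hne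
  have hle : firstm lam mu w t ≤ m0 := le_trans (Nat.sInf_le hm') hm'le
  have hpos : 1 ≤ firstm lam mu w t := by
    rcases Nat.eq_zero_or_pos (firstm lam mu w t) with h | h
    · rw [h, cnt_zero] at hmem; omega
    · exact h
  refine ⟨hmem, hle, hpos, ?_⟩
  by_contra hc
  push_neg at hc
  have hstep := cnt_succ lam mu (firstm lam mu w t - 1) t
  rw [if_neg (by omega)] at hstep
  have hm : firstm lam mu w t - 1 + 1 = firstm lam mu w t := by omega
  rw [hm] at hstep
  have hmem2 : firstm lam mu w t - 1 ∈ {m | cnt lam mu m t = w} := by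
    rw [Set.mem_setOf_eq]
    omega
  have hcontra : firstm lam mu w t ≤ firstm lam mu w t - 1 := Nat.sInf_le hmem2
  omega

private lemma Tstar_lattice (lam mu : YoungDiagram) : IsLattice lam mu (Tstar lam mu) := by
  intro i j v
  unfold prefixCount
  set q : ℕ × ℕ → ℕ × ℕ := fun p =>
    (firstm lam mu (v + 1) (lam.rowLen p.1 - p.2) - 1,
     lam.rowLen (firstm lam mu (v + 1) (lam.rowLen p.1 - p.2) - 1) - (lam.rowLen p.1 - p.2))
    with hq
  have key : ∀ p ∈ (skewCells lam mu).filter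
      (fun p => (p.1 < i ∨ (p.1 = i ∧ j ≤ p.2)) ∧ Tstar lam mu p = v + 2),
      (q p ∈ (skewCells lam mu).filter
        (fun p => (p.1 < i ∨ (p.1 = i ∧ j ≤ p.2)) ∧ Tstar lam mu p = v + 1)) ∧
      lam.rowLen (q p).1 - (q p).2 = lam.rowLen p.1 - p.2 := by
    intro p hp
    rw [Finset.mem_filter] at hp
    obtain ⟨hpS, hppos, hpT⟩ := hp
    have ht := tcode hpS
    have hcnt2 : cnt lam mu (p.1 + 1) (lam.rowLen p.1 - p.2) = v + 2 := by
      rw [← Tstar_eq hpS]; exact hpT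
    have hstep := cnt_succ lam mu p.1 (lam.rowLen p.1 - p.2)
    rw [if_pos ht.2.1] at hstep
    have hcp : v + 1 ≤ cnt lam mu p.1 (lam.rowLen p.1 - p.2) := by omega
    obtain ⟨hm1, hm2, hm3, hm4⟩ := firstm_spec (by omega : 1 ≤ v + 1) hcp
    have hcell : ((firstm lam mu (v + 1) (lam.rowLen p.1 - p.2) - 1),
        lam.rowLen (firstm lam mu (v + 1) (lam.rowLen p.1 - p.2) - 1) - (lam.rowLen p.1 - p.2))
        ∈ skewCells lam mu := cell_mem ht.1 hm4
    have hTq : Tstar lam mu ((firstm lam mu (v + 1) (lam.rowLen p.1 - p.2) - 1),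
        lam.rowLen (firstm lam mu (v + 1) (lam.rowLen p.1 - p.2) - 1) - (lam.rowLen p.1 - p.2))
        = v + 1 := by
      rw [Tstar_cell ht.1 hm4]
      have heq : firstm lam mu (v + 1) (lam.rowLen p.1 - p.2) - 1 + 1
          = firstm lam mu (v + 1) (lam.rowLen p.1 - p.2) := by omega
      rw [heq]
      exact hm1
    constructor
    · rw [Finset.mem_filter]
      refine ⟨hcell, Or.inl ?_, hTq⟩
      show firstm lam mu (v + 1) (lam.rowLen p.1 - p.2) - 1 < i
      omega
    · show lam.rowLen (firstm lam mu (v + 1) (lam.rowLen p.1 - p.2) - 1) -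
        (lam.rowLen (firstm lam mu (v + 1) (lam.rowLen p.1 - p.2) - 1) - (lam.rowLen p.1 - p.2))
        = lam.rowLen p.1 - p.2
      have hrl : lam.rowLen p.1 - p.2
          ≤ lam.rowLen (firstm lam mu (v + 1) (lam.rowLen p.1 - p.2) - 1) := by
        have := hm4; omega
      omega
  apply Finset.card_le_card_of_injOn q (fun p hp => (key p hp).1)
  intro p1 hp1 p2 hp2 heq
  rw [Finset.mem_coe] at hp1 hp2
  have h1 := key p1 hp1
  have h2 := key p2 hp2
  have htt : lam.rowLen p1.1 - p1.2 = lam.rowLen p2.1 - p2.2 := by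
    rw [← h1.2, ← h2.2, heq]
  rw [Finset.mem_filter] at hp1 hp2
  have hc1 : cnt lam mu (p1.1 + 1) (lam.rowLen p1.1 - p1.2) = v + 2 := by
    rw [← Tstar_eq hp1.1]; exact hp1.2.2
  have hc2 : cnt lam mu (p2.1 + 1) (lam.rowLen p2.1 - p2.2) = v + 2 := by
    rw [← Tstar_eq hp2.1]; exact hp2.2.2
  have ht1 := tcode hp1.1
  have ht2 := tcode hp2.1
  have hrows : p1.1 = p2.1 := by
    by_contra hne
    rcases Nat.lt_or_ge p1.1 p2.1 with h | h
    · have hX : lam.rowLen p1.1 - p1.2 ≤ lam.rowLen p2.1 - mu.rowLen p2.1 := by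
        rw [htt]; exact ht2.2.1
      have hlt := cnt_strict h hX
      rw [← htt] at hc2
      omega
    · have hlt0 : p2.1 < p1.1 := by omega
      have hX : lam.rowLen p2.1 - p2.2 ≤ lam.rowLen p1.1 - mu.rowLen p1.1 := by
        rw [← htt]; exact ht1.2.1
      have hlt := cnt_strict hlt0 hX
      rw [htt] at hc1
      omega
  apply Prod.ext_iff.mpr
  refine ⟨hrows, ?_⟩
  rw [ht1.2.2, ht2.2.2, htt, hrows]

/-! ### The content of the canonical filling -/

private lemma Tstar_content (lam mu : YoungDiagram) (v : ℕ) :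
    content lam mu (Tstar lam mu) (v + 1) = sFun lam mu (v + 1) := by
  unfold content sFun
  apply le_antisymm
  · -- cells ↦ codes
    apply Finset.card_le_card_of_injOn (fun p => lam.rowLen p.1 - p.2 - 1)
    · intro p hp
      simp only [Finset.mem_coe, Finset.mem_filter] at hp
      have ht := tcode hp.1
      have hc : cnt lam mu (p.1 + 1) (lam.rowLen p.1 - p.2) = v + 1 := by
        rw [← Tstar_eq hp.1]; exact hp.2
      have hB : p.1 + 1 ≤ lam.colLen 0 := fst_lt_colLen hp.1
      have hmono := cnt_mono (lam := lam) (mu := mu) hB (lam.rowLen p.1 - p.2)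
      have hTm : lam.rowLen p.1 ≤ lam.rowLen 0 := lam.rowLen_anti 0 p.1 (Nat.zero_le _)
      rw [Finset.mem_coe, Finset.mem_filter, Finset.mem_range]; dsimp only
      have harg : lam.rowLen p.1 - p.2 - 1 + 1 = lam.rowLen p.1 - p.2 := by omega
      rw [harg]
      exact ⟨by omega, by omega⟩
    · intro p1 hp1 p2 hp2 heq
      simp only [Finset.mem_coe, Finset.mem_filter] at hp1 hp2
      have ht1 := tcode hp1.1
      have ht2 := tcode hp2.1
      have heq' : lam.rowLen p1.1 - p1.2 - 1 = lam.rowLen p2.1 - p2.2 - 1 := heq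
      have htt : lam.rowLen p1.1 - p1.2 = lam.rowLen p2.1 - p2.2 := by omega
      have hc1 : cnt lam mu (p1.1 + 1) (lam.rowLen p1.1 - p1.2) = v + 1 := by
        rw [← Tstar_eq hp1.1]; exact hp1.2
      have hc2 : cnt lam mu (p2.1 + 1) (lam.rowLen p2.1 - p2.2) = v + 1 := by
        rw [← Tstar_eq hp2.1]; exact hp2.2
      have hrows : p1.1 = p2.1 := by
        by_contra hne
        rcases Nat.lt_or_ge p1.1 p2.1 with h | h
        · have hX : lam.rowLen p1.1 - p1.2 ≤ lam.rowLen p2.1 - mu.rowLen p2.1 := by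
            rw [htt]; exact ht2.2.1
          have hlt := cnt_strict h hX
          rw [← htt] at hc2
          omega
        · have hlt0 : p2.1 < p1.1 := by omega
          have hX : lam.rowLen p2.1 - p2.2 ≤ lam.rowLen p1.1 - mu.rowLen p1.1 := by
            rw [← htt]; exact ht1.2.1
          have hlt := cnt_strict hlt0 hX
          rw [htt] at hc1
          omega
      apply Prod.ext_iff.mpr
      refine ⟨hrows, ?_⟩
      rw [ht1.2.2, ht2.2.2, htt, hrows]
  · -- codes ↦ cells
    apply Finset.card_le_card_of_injOn (fun c =>
      (firstm lam mu (v + 1) (c + 1) - 1,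
       lam.rowLen (firstm lam mu (v + 1) (c + 1) - 1) - (c + 1)))
    · intro c hc
      simp only [Finset.mem_coe, Finset.mem_filter, Finset.mem_range] at hc
      obtain ⟨hm1, hm2, hm3, hm4⟩ := firstm_spec (by omega : 1 ≤ v + 1) hc.2
      rw [Finset.mem_coe, Finset.mem_filter]
      refine ⟨cell_mem (by omega) hm4, ?_⟩
      rw [Tstar_cell (by omega) hm4]
      have heq : firstm lam mu (v + 1) (c + 1) - 1 + 1 = firstm lam mu (v + 1) (c + 1) := by
        omega
      rw [heq]
      exact hm1
    · intro c1 hc1 c2 hc2 heq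
      simp only [Finset.mem_coe, Finset.mem_filter, Finset.mem_range] at hc1 hc2
      obtain ⟨ha1, ha2, ha3, ha4⟩ := firstm_spec (by omega : 1 ≤ v + 1) hc1.2
      obtain ⟨hb1, hb2, hb3, hb4⟩ := firstm_spec (by omega : 1 ≤ v + 1) hc2.2
      have h1 := congrArg Prod.fst heq
      have h2 := congrArg Prod.snd heq
      simp only at h1 h2
      rw [h1] at h2 ha4
      omega

/-- The partition of the sorted row lengths of the skew shape. -/
private def nuStar (lam mu : YoungDiagram) : YoungDiagram :=
  ⟨(Finset.range (lam.colLen 0) ×ˢ Finset.range (lam.rowLen 0)).filter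
      (fun p => p.1 + 1 ≤ cnt lam mu (lam.colLen 0) (p.2 + 1)), by
    intro b a hba hb
    obtain ⟨hba1, hba2⟩ := Prod.le_def.mp hba
    simp only [Finset.coe_filter, Set.mem_setOf_eq, Finset.mem_product, Finset.mem_range]
      at hb ⊢
    obtain ⟨⟨h1, h2⟩, h3⟩ := hb
    have hmono : cnt lam mu (lam.colLen 0) (b.2 + 1) ≤ cnt lam mu (lam.colLen 0) (a.2 + 1) :=
      cnt_anti lam mu (lam.colLen 0) (by omega)
    exact ⟨⟨by omega, by omega⟩, by omega⟩⟩

private lemma nuStar_cells (lam mu : YoungDiagram) :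
    (nuStar lam mu).cells = (Finset.range (lam.colLen 0) ×ˢ Finset.range (lam.rowLen 0)).filter
      (fun p => p.1 + 1 ≤ cnt lam mu (lam.colLen 0) (p.2 + 1)) := rfl

private lemma mem_nuStar (lam mu : YoungDiagram) (p : ℕ × ℕ) :
    p ∈ nuStar lam mu ↔ (p.1 < lam.colLen 0 ∧ p.2 < lam.rowLen 0) ∧
      p.1 + 1 ≤ cnt lam mu (lam.colLen 0) (p.2 + 1) := by
  rw [← mem_cells, nuStar_cells, Finset.mem_filter, Finset.mem_product,
    Finset.mem_range, Finset.mem_range]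

/-- the bound needed for antitone counting -/
private lemma cnt_code_bound {lam mu : YoungDiagram} {c v : ℕ}
    (hc : v + 1 ≤ cnt lam mu (lam.colLen 0) (c + 1)) : c < lam.rowLen 0 := by
  have hpos : 0 < cnt lam mu (lam.colLen 0) (c + 1) := by omega
  obtain ⟨x, hx⟩ := Finset.card_pos.mp hpos
  rw [Finset.mem_filter, Finset.mem_range] at hx
  have := lam.rowLen_anti 0 x (Nat.zero_le x)
  omega

/-- characterization of an antitone predicate by its count -/
private lemma mem_filter_range_antitone {P : ℕ → Prop} [DecidablePred P] (N : ℕ)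
    (hanti : ∀ c d, c ≤ d → P d → P c) (hbound : ∀ c, P c → c < N) (c : ℕ) :
    P c ↔ c < ((Finset.range N).filter P).card := by
  constructor
  · intro hc
    have hsub : Finset.range (c + 1) ⊆ (Finset.range N).filter P := by
      intro x hx
      rw [Finset.mem_range] at hx
      rw [Finset.mem_filter, Finset.mem_range]
      have hPx : P x := hanti x c (by omega) hc
      exact ⟨hbound x hPx, hPx⟩
    have := Finset.card_le_card hsub
    rw [Finset.card_range] at this
    omega
  · intro hc
    by_contra hP
    have hsub : (Finset.range N).filter P ⊆ Finset.range c := by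
      intro x hx
      rw [Finset.mem_filter, Finset.mem_range] at hx
      rw [Finset.mem_range]
      by_contra hxc
      exact hP (hanti c x (by omega) hx.2)
    have := Finset.card_le_card hsub
    rw [Finset.card_range] at this
    omega

private lemma nuStar_mem_iff (lam mu : YoungDiagram) (v j : ℕ) :
    (v, j) ∈ nuStar lam mu ↔ j < sFun lam mu (v + 1) := by
  have hchar := mem_filter_range_antitone (P := fun c => v + 1 ≤ cnt lam mu (lam.colLen 0) (c + 1))
    (lam.rowLen 0) (fun c d hcd hd => le_trans hd (cnt_anti lam mu _ (by omega)))
    (fun c hc => cnt_code_bound hc) j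
  rw [mem_nuStar]
  unfold sFun
  constructor
  · intro h
    exact hchar.mp h.2
  · intro h
    have hPj : v + 1 ≤ cnt lam mu (lam.colLen 0) (j + 1) := hchar.mpr h
    have hj := cnt_code_bound hPj
    have hvB : v + 1 ≤ lam.colLen 0 := le_trans hPj (cnt_le _ _ _ _)
    exact ⟨⟨by omega, hj⟩, hPj⟩

private lemma nuStar_rowLen (lam mu : YoungDiagram) (v : ℕ) :
    (nuStar lam mu).rowLen v = sFun lam mu (v + 1) := by
  apply le_antisymm
  · by_contra h
    push_neg at h
    have h1 : (v, sFun lam mu (v + 1)) ∈ nuStar lam mu := mem_iff_lt_rowLen.mpr h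
    have := (nuStar_mem_iff lam mu v _).mp h1
    omega
  · by_contra h
    push_neg at h
    have h1 : (v, (nuStar lam mu).rowLen v) ∈ nuStar lam mu :=
      (nuStar_mem_iff lam mu v _).mpr h
    have := mem_iff_lt_rowLen.mp h1
    omega

private lemma nuStar_colLen (lam mu : YoungDiagram) :
    (nuStar lam mu).colLen 0 ≤ lam.colLen 0 := by
  by_contra hc
  push_neg at hc
  have h1 : (lam.colLen 0, 0) ∈ nuStar lam mu := mem_iff_lt_colLen.mpr hc
  rw [mem_nuStar] at h1
  omega

/-- counting an antitone predicate on an initial segment -/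
private lemma card_filter_range_antitone {P : ℕ → Prop} [DecidablePred P] (N : ℕ)
    (hanti : ∀ c d, c ≤ d → P d → P c) (hbound : ∀ c, P c → c < N) (n : ℕ) :
    ((Finset.range n).filter P).card = min (((Finset.range N).filter P).card) n := by
  have hchar : ∀ c, P c ↔ c < ((Finset.range N).filter P).card := by
    intro c
    constructor
    · intro hc
      have hsub : Finset.range (c + 1) ⊆ (Finset.range N).filter P := by
        intro x hx
        rw [Finset.mem_range] at hx
        rw [Finset.mem_filter, Finset.mem_range]
        have hPx : P x := hanti x c (by omega) hc
        exact ⟨hbound x hPx, hPx⟩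
      have := Finset.card_le_card hsub
      rw [Finset.card_range] at this
      omega
    · intro hc
      by_contra hP
      have hsub : (Finset.range N).filter P ⊆ Finset.range c := by
        intro x hx
        rw [Finset.mem_filter, Finset.mem_range] at hx
        rw [Finset.mem_range]
        by_contra hxc
        exact hP (hanti c x (by omega) hx.2)
      have := Finset.card_le_card hsub
      rw [Finset.card_range] at this
      omega
  have hfin : (Finset.range n).filter P
      = Finset.range (min (((Finset.range N).filter P).card) n) := by
    ext c
    rw [Finset.mem_filter, Finset.mem_range, Finset.mem_range, hchar c]
    omega
  rw [hfin, Finset.card_range]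

private lemma F_nuStar (lam mu : YoungDiagram) (k : ℕ) :
    F (nuStar lam mu) k = G lam mu k := by
  classical
  have hb : ∀ c v : ℕ, v + 1 ≤ cnt lam mu (lam.colLen 0) (c + 1) → c < lam.rowLen 0 := by
    intro c v hc
    have hpos : 0 < cnt lam mu (lam.colLen 0) (c + 1) := by omega
    obtain ⟨x, hx⟩ := Finset.card_pos.mp hpos
    rw [Finset.mem_filter, Finset.mem_range] at hx
    have := lam.rowLen_anti 0 x (Nat.zero_le x)
    omega
  have h0 : F (nuStar lam mu) k = ∑ v ∈ Finset.range (lam.colLen 0),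
      min (sFun lam mu (v + 1)) k := by
    have h0a : F (nuStar lam mu) k = ∑ v ∈ Finset.range ((nuStar lam mu).colLen 0),
        min (sFun lam mu (v + 1)) k :=
      Finset.sum_congr rfl fun v _ => by rw [nuStar_rowLen]
    rw [h0a]
    apply Finset.sum_subset (Finset.range_subset_range.mpr (nuStar_colLen lam mu))
    intro v _ hnv
    rw [Finset.mem_range] at hnv
    rw [← nuStar_rowLen, rowLen_zero_of_le (by omega)]
    simp
  have h1 : ∀ v, min (sFun lam mu (v + 1)) k
      = ((Finset.range k).filter fun c => v + 1 ≤ cnt lam mu (lam.colLen 0) (c + 1)).card := by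
    intro v
    rw [card_filter_range_antitone (lam.rowLen 0)
      (fun c d hcd hd => le_trans hd (cnt_anti lam mu _ (by omega)))
      (fun c hc => hb c v hc) k]
    rfl
  have h2 : ∑ v ∈ Finset.range (lam.colLen 0),
        ((Finset.range k).filter fun c => v + 1 ≤ cnt lam mu (lam.colLen 0) (c + 1)).card
      = ∑ c ∈ Finset.range k,
        ((Finset.range (lam.colLen 0)).filter
          fun v => v + 1 ≤ cnt lam mu (lam.colLen 0) (c + 1)).card := by
    simp only [Finset.card_filter]
    exact Finset.sum_comm
  have h3 : ∀ c, ((Finset.range (lam.colLen 0)).filter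
      fun v => v + 1 ≤ cnt lam mu (lam.colLen 0) (c + 1)).card
      = cnt lam mu (lam.colLen 0) (c + 1) := by
    intro c
    have hle := cnt_le lam mu (lam.colLen 0) (c + 1)
    have : ((Finset.range (lam.colLen 0)).filter
        fun v => v + 1 ≤ cnt lam mu (lam.colLen 0) (c + 1))
        = Finset.range (cnt lam mu (lam.colLen 0) (c + 1)) := by
      ext v
      rw [Finset.mem_filter, Finset.mem_range, Finset.mem_range]
      omega
    rw [this, Finset.card_range]
  have h4 : ∑ c ∈ Finset.range k, cnt lam mu (lam.colLen 0) (c + 1)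
      = ∑ i ∈ Finset.range (lam.colLen 0), min (lam.rowLen i - mu.rowLen i) k := by
    unfold cnt
    simp only [Finset.card_filter]
    rw [Finset.sum_comm]
    apply Finset.sum_congr rfl
    intro i _
    have hfin : ((Finset.range k).filter fun c => c + 1 ≤ lam.rowLen i - mu.rowLen i)
        = Finset.range (min (lam.rowLen i - mu.rowLen i) k) := by
      ext c
      rw [Finset.mem_filter, Finset.mem_range, Finset.mem_range]
      omega
    rw [← Finset.card_filter, hfin, Finset.card_range]
  rw [h0]
  simp only [h1]
  rw [h2]
  simp only [h3]
  rw [h4]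
  rfl

private lemma exists_lr (lam mu : YoungDiagram) :
    ∃ (nu : YoungDiagram) (T : ℕ × ℕ → ℕ), IsLR lam mu nu T ∧ ∀ k, F nu k = G lam mu k := by
  refine ⟨nuStar lam mu, Tstar lam mu,
    ⟨Tstar_ssyt lam mu, Tstar_lattice lam mu, ?_⟩, F_nuStar lam mu⟩
  intro i
  rw [Tstar_content, nuStar_rowLen]

/-! ### Finiteness of the set of LR tableaux, and the final assembly -/

private lemma finite_isLR (lam mu nu : YoungDiagram) :
    {T : ℕ × ℕ → ℕ | IsLR lam mu nu T}.Finite := by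
  classical
  have hbound : ∀ T, IsLR lam mu nu T → ∀ p, T p ≤ nu.colLen 0 := by
    intro T hT p
    obtain ⟨⟨hsupp, -, -⟩, -, hcont⟩ := hT
    rcases Nat.eq_zero_or_pos (T p) with h | h
    · omega
    · have hpS : p ∈ skewCells lam mu := (hsupp p).mpr (by omega)
      obtain ⟨w, hw⟩ : ∃ w, T p = w + 1 := ⟨T p - 1, by omega⟩
      have hcpos : 0 < content lam mu T (w + 1) :=
        Finset.card_pos.mpr ⟨p, Finset.mem_filter.mpr ⟨hpS, hw⟩⟩
      rw [hcont w] at hcpos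
      have h1 : (w, 0) ∈ nu := mem_iff_lt_rowLen.mpr hcpos
      have h2 := mem_iff_lt_colLen.mp h1
      omega
  apply Set.Finite.of_finite_image
    (f := fun T => fun p : {x // x ∈ skewCells lam mu} =>
      (⟨min (T p.1) (nu.colLen 0), by omega⟩ : Fin (nu.colLen 0 + 1)))
  · exact Set.Finite.subset Set.finite_univ (Set.subset_univ _)
  · intro T1 h1 T2 h2 heq
    funext p
    by_cases hp : p ∈ skewCells lam mu
    · have hfun := congrFun heq ⟨p, hp⟩
      simp only [Fin.mk.injEq] at hfun
      have b1 := hbound T1 h1 p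
      have b2 := hbound T2 h2 p
      omega
    · have z1 : T1 p = 0 := by
        by_contra hz
        exact hp ((h1.1.1 p).mpr hz)
      have z2 : T2 p = 0 := by
        by_contra hz
        exact hp ((h2.1.1 p).mpr hz)
      rw [z1, z2]

private lemma lrCoeff_ne_zero_iff {lam mu : YoungDiagram} (hmu : mu ≤ lam)
    (nu : YoungDiagram) :
    lrCoeff lam mu nu ≠ 0 ↔ ∃ T, IsLR lam mu nu T := by
  unfold lrCoeff
  rw [if_pos hmu]
  constructor
  · intro h
    obtain ⟨T, hT⟩ := Set.nonempty_of_ncard_ne_zero h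
    exact ⟨T, hT⟩
  · rintro ⟨T, hT⟩
    have := (Set.ncard_pos (finite_isLR lam mu nu)).mpr ⟨T, hT⟩
    omega

private lemma G_succ (lam mu : YoungDiagram) (c : ℕ) :
    G lam mu (c + 1) = G lam mu c + cnt lam mu (lam.colLen 0) (c + 1) := by
  unfold G cnt
  rw [Finset.card_filter, ← Finset.sum_add_distrib]
  apply Finset.sum_congr rfl
  intro i _
  split_ifs with h <;> omega

private lemma ncard_eq (lam mu : YoungDiagram) {r : ℕ} (hr : 0 < r) :
    {i : ℕ | lam.rowLen i - mu.rowLen i = r}.ncard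
      = cnt lam mu (lam.colLen 0) r - cnt lam mu (lam.colLen 0) (r + 1) := by
  classical
  have hseteq : {i : ℕ | lam.rowLen i - mu.rowLen i = r}
      = ↑((Finset.range (lam.colLen 0)).filter fun i => lam.rowLen i - mu.rowLen i = r) := by
    ext i
    simp only [Set.mem_setOf_eq, Finset.coe_filter, Set.mem_setOf_eq, Finset.mem_range]
    constructor
    · intro hi
      refine ⟨?_, hi⟩
      have hpos : 0 < lam.rowLen i := by omega
      exact mem_iff_lt_colLen.mp (mem_iff_lt_rowLen.mpr hpos)
    · exact fun h => h.2
  rw [hseteq, Set.ncard_coe_finset]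
  have hsplit : (Finset.range (lam.colLen 0)).filter (fun i => r ≤ lam.rowLen i - mu.rowLen i)
      = ((Finset.range (lam.colLen 0)).filter fun i => lam.rowLen i - mu.rowLen i = r)
        ∪ ((Finset.range (lam.colLen 0)).filter fun i => r + 1 ≤ lam.rowLen i - mu.rowLen i) := by
    ext i
    simp only [Finset.mem_union, Finset.mem_filter, Finset.mem_range]
    omega
  have hdisj : Disjoint
      ((Finset.range (lam.colLen 0)).filter fun i => lam.rowLen i - mu.rowLen i = r)
      ((Finset.range (lam.colLen 0)).filter fun i => r + 1 ≤ lam.rowLen i - mu.rowLen i) := by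
    rw [Finset.disjoint_left]
    intro a ha hb
    rw [Finset.mem_filter] at ha hb
    omega
  have hcard := congrArg Finset.card hsplit
  rw [Finset.card_union_of_disjoint hdisj] at hcard
  have e1 : ((Finset.range (lam.colLen 0)).filter
      (fun i => r ≤ lam.rowLen i - mu.rowLen i)).card = cnt lam mu (lam.colLen 0) r := rfl
  have e2 : ((Finset.range (lam.colLen 0)).filter
      (fun i => r + 1 ≤ lam.rowLen i - mu.rowLen i)).card
      = cnt lam mu (lam.colLen 0) (r + 1) := rfl
  omega


/-- skew diagrams with equal skew Schur functions have the same multiset of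
row lengths (parts). -/
theorem rowLengths_eq_of_schurEq (lam mu alp bet : YoungDiagram)
    (hmu : mu ≤ lam) (hbet : bet ≤ alp) (h : SchurEq lam mu alp bet) :
    ∀ r : ℕ, 0 < r →
      {i : ℕ | lam.rowLen i - mu.rowLen i = r}.ncard =
        {i : ℕ | alp.rowLen i - bet.rowLen i = r}.ncard := by
  classical
  intro r hr
  have hGeq : ∀ k, G lam mu k = G alp bet k := by
    intro k
    apply le_antisymm
    · obtain ⟨nu, T, hLR, hF⟩ := exists_lr lam mu
      have hne : lrCoeff lam mu nu ≠ 0 := (lrCoeff_ne_zero_iff hmu nu).mpr ⟨T, hLR⟩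
      rw [h nu] at hne
      obtain ⟨T', hT'⟩ := (lrCoeff_ne_zero_iff hbet nu).mp hne
      calc G lam mu k = F nu k := (hF k).symm
        _ ≤ G alp bet k := F_le_G hT' k
    · obtain ⟨nu, T, hLR, hF⟩ := exists_lr alp bet
      have hne : lrCoeff alp bet nu ≠ 0 := (lrCoeff_ne_zero_iff hbet nu).mpr ⟨T, hLR⟩
      rw [← h nu] at hne
      obtain ⟨T', hT'⟩ := (lrCoeff_ne_zero_iff hmu nu).mp hne
      calc G alp bet k = F nu k := (hF k).symm
        _ ≤ G lam mu k := F_le_G hT' k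
  have hcnt : ∀ c : ℕ, cnt lam mu (lam.colLen 0) (c + 1) = cnt alp bet (alp.colLen 0) (c + 1) := by
    intro c
    have h1 := G_succ lam mu c
    have h2 := G_succ alp bet c
    have e1 := hGeq c
    have e2 := hGeq (c + 1)
    omega
  rw [ncard_eq lam mu hr, ncard_eq alp bet hr]
  obtain ⟨r', rfl⟩ : ∃ r', r = r' + 1 := ⟨r - 1, by omega⟩
  rw [hcnt r', hcnt (r' + 1)]

end LRSkew
end

section
/- Removing the top box of every column of a skew diagram λ/μ gives a skew diagram λ̂/μ with λ̂ obtained from λ by decreasing each of the columns' top rows, and there is a bijection between LR tableaux of shape λ/μ with content ν satisfying ν_1 = λ_1 (maximal first part) and LR tableaux of shape λ̂/μ with content (ν_2, ν_3, …). Consequently c(λ; μ, ν) with ν_1 = λ_1 equals c(λ̂; μ, (ν_2, ν_3, …)). -/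
open YoungDiagram
open scoped Classical

namespace LRSkew

-- AUX START
lemma mem_skew_iff {lam mu : YoungDiagram} {p : ℕ × ℕ} :
    p ∈ skewCells lam mu ↔ mu.colLen p.2 ≤ p.1 ∧ p.1 < lam.colLen p.2 := by
  obtain ⟨i, j⟩ := p
  simp [skewCells, Finset.mem_sdiff, YoungDiagram.mem_cells,
    YoungDiagram.mem_iff_lt_colLen, not_lt, and_comm]

lemma tops_one {lam mu nu : YoungDiagram} {T : ℕ × ℕ → ℕ}
    (hnu1 : nu.rowLen 0 = lam.rowLen 0) (hT : IsLR lam mu nu T) :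
    ∀ j, mu.colLen j < lam.colLen j → T (mu.colLen j, j) = 1 := by
  classical
  set F := (skewCells lam mu).filter fun p => T p = 1 with hF
  have hcard : F.card = lam.rowLen 0 := by
    have := hT.2.2 0
    simpa [content, hnu1] using this
  have hinj : Set.InjOn Prod.snd (F : Set (ℕ × ℕ)) := by
    intro p hp q hq hpq
    simp only [hF, Finset.coe_filter, Set.mem_setOf_eq] at hp hq
    by_contra hne
    have hne1 : p.1 ≠ q.1 := fun h => hne (Prod.ext h hpq)
    have key : ∀ a b : ℕ × ℕ, a ∈ skewCells lam mu ∧ T a = 1 →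
        b ∈ skewCells lam mu ∧ T b = 1 → a.2 = b.2 → a.1 < b.1 → False := by
      intro a b ha hb hab h
      have := hT.1.2.2 a.1 b.1 a.2 (by rw [show (a.1, a.2) = a from rfl]; exact ha.1)
        (by rw [show (b.1, a.2) = b from Prod.ext rfl hab]; exact hb.1) h
      rw [show (a.1, a.2) = a from rfl,
        show (b.1, a.2) = b from Prod.ext rfl hab] at this
      omega
    rcases lt_or_gt_of_ne hne1 with h | h
    · exact key p q hp hq hpq h
    · exact key q p hq hp hpq.symm h
  have himsub : F.image Prod.snd ⊆ Finset.range (lam.rowLen 0) := by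
    intro j hj
    simp only [Finset.mem_image] at hj
    obtain ⟨p, hp, rfl⟩ := hj
    have hps : p ∈ skewCells lam mu := (Finset.mem_filter.mp hp).1
    have hmem : p ∈ lam := (mem_skew_iff.mp hps).2 |> fun h =>
      YoungDiagram.mem_iff_lt_colLen.mpr h
    have : p.2 < lam.rowLen p.1 := by
      have := YoungDiagram.mem_iff_lt_rowLen.mp (by simpa using hmem)
      simpa using this
    exact Finset.mem_range.mpr (lt_of_lt_of_le this (lam.rowLen_anti 0 p.1 (Nat.zero_le _)))
  have himeq : F.image Prod.snd = Finset.range (lam.rowLen 0) := by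
    apply Finset.eq_of_subset_of_card_le himsub
    rw [Finset.card_range, ← hcard]
    exact le_of_eq (Finset.card_image_of_injOn hinj).symm
  intro j hj
  have hjlt : j < lam.rowLen 0 := by
    have : (0, j) ∈ lam := YoungDiagram.mem_iff_lt_colLen.mpr (by omega)
    exact YoungDiagram.mem_iff_lt_rowLen.mp this
  have : j ∈ F.image Prod.snd := himeq ▸ Finset.mem_range.mpr hjlt
  simp only [Finset.mem_image] at this
  obtain ⟨p, hp, hpj⟩ := this
  rw [Finset.mem_filter] at hp
  obtain ⟨hps, hp1⟩ := hp
  have hms := mem_skew_iff.mp hps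
  rw [hpj] at hms
  have hptop : p.1 = mu.colLen j := by
    by_contra hne
    have hlt : mu.colLen j < p.1 := by omega
    have htopmem : (mu.colLen j, j) ∈ skewCells lam mu := mem_skew_iff.mpr (by simp; omega)
    have hstrict := hT.1.2.2 (mu.colLen j) p.1 j htopmem
      (by rw [show (p.1, j) = p from Prod.ext rfl hpj.symm]; exact hps) hlt
    rw [show (p.1, j) = p from Prod.ext rfl hpj.symm] at hstrict
    have hpos : T (mu.colLen j, j) ≠ 0 := (hT.1.1 _).mp htopmem
    omega
  rw [show (mu.colLen j, j) = p from Prod.ext hptop.symm hpj.symm]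
  exact hp1

lemma nontop_ge_two {lam mu nu : YoungDiagram} {T : ℕ × ℕ → ℕ}
    (hnu1 : nu.rowLen 0 = lam.rowLen 0) (hT : IsLR lam mu nu T) :
    ∀ p ∈ skewCells lam mu, mu.colLen p.2 < p.1 → 2 ≤ T p := by
  intro p hp hlt
  have hms := mem_skew_iff.mp hp
  have htopmem : (mu.colLen p.2, p.2) ∈ skewCells lam mu := mem_skew_iff.mpr (by simp; omega)
  have hstrict := hT.1.2.2 (mu.colLen p.2) p.1 p.2 htopmem
    (by rw [show (p.1, p.2) = p from rfl]; exact hp) hlt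
  rw [show (p.1, p.2) = p from rfl] at hstrict
  have := tops_one hnu1 hT p.2 (by omega)
  omega

lemma mem_skewHat_iff {lam lamHat mu : YoungDiagram}
    (hhat : ∀ j, lamHat.colLen j = lam.colLen j - 1) {p : ℕ × ℕ} :
    p ∈ skewCells lamHat mu ↔ mu.colLen p.2 ≤ p.1 ∧ p.1 + 1 < lam.colLen p.2 := by
  rw [mem_skew_iff, hhat]
  omega

noncomputable def Phi (lamHat mu : YoungDiagram) (T : ℕ × ℕ → ℕ) : ℕ × ℕ → ℕ :=
  fun p => if p ∈ skewCells lamHat mu then T (p.1 + 1, p.2) - 1 else 0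

noncomputable def Psi (lam mu : YoungDiagram) (S : ℕ × ℕ → ℕ) : ℕ × ℕ → ℕ :=
  fun p => if p ∈ skewCells lam mu then
    (if p.1 = mu.colLen p.2 then 1 else S (p.1 - 1, p.2) + 1) else 0

lemma card_shift {lam lamHat mu : YoungDiagram}
    (hhat : ∀ j, lamHat.colLen j = lam.colLen j - 1)
    (T : ℕ × ℕ → ℕ) (Q : ℕ × ℕ → Prop) (m : ℕ)
    (hnontop : ∀ q ∈ skewCells lam mu, T q = m + 2 → mu.colLen q.2 < q.1) :
    ((skewCells lamHat mu).filter fun p => Q (p.1 + 1, p.2) ∧ T (p.1 + 1, p.2) = m + 2).card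
      = ((skewCells lam mu).filter fun q => Q q ∧ T q = m + 2).card := by
  apply Finset.card_bij (fun p _ => (p.1 + 1, p.2))
  · intro p hp
    rw [Finset.mem_filter] at hp ⊢
    obtain ⟨hps, hQ, hTv⟩ := hp
    have := (mem_skewHat_iff hhat).mp hps
    exact ⟨mem_skew_iff.mpr (by simp; omega), hQ, hTv⟩
  · intro p hp q hq h
    simp only [Prod.mk.injEq] at h
    exact Prod.ext (by omega) h.2
  · intro q hq
    rw [Finset.mem_filter] at hq
    obtain ⟨hqs, hQ, hTv⟩ := hq
    have hms := mem_skew_iff.mp hqs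
    have hnt : mu.colLen q.2 < q.1 := hnontop q hqs hTv
    refine ⟨(q.1 - 1, q.2), ?_, ?_⟩
    · rw [Finset.mem_filter]
      refine ⟨(mem_skewHat_iff hhat).mpr (by simp; omega), ?_⟩
      rw [show (q.1 - 1 + 1, q.2) = q from Prod.ext (by simp; omega) rfl]
      exact ⟨hQ, hTv⟩
    · exact Prod.ext (by simp; omega) rfl

lemma prefixCount_Phi {lam lamHat mu nu : YoungDiagram} {T : ℕ × ℕ → ℕ}
    (hhat : ∀ j, lamHat.colLen j = lam.colLen j - 1)
    (hnu1 : nu.rowLen 0 = lam.rowLen 0) (hT : IsLR lam mu nu T) (i j m : ℕ) :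
    prefixCount lamHat mu (Phi lamHat mu T) i j (m + 1)
      = prefixCount lam mu T (i + 1) j (m + 2) := by
  have hnontop : ∀ q ∈ skewCells lam mu, T q = m + 2 → mu.colLen q.2 < q.1 := by
    intro q hq hTv
    have hms := mem_skew_iff.mp hq
    rcases Nat.lt_or_ge (mu.colLen q.2) q.1 with h | h
    · exact h
    · exfalso
      have hq1 : q.1 = mu.colLen q.2 := by omega
      have := tops_one hnu1 hT q.2 (by omega)
      rw [show (mu.colLen q.2, q.2) = q from Prod.ext hq1.symm rfl] at this
      omega
  unfold prefixCount
  have key := card_shift hhat T (fun q => q.1 < i + 1 ∨ (q.1 = i + 1 ∧ j ≤ q.2)) m hnontop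
  refine Eq.trans ?_ (Eq.trans key ?_)
  · apply congrArg Finset.card
    ext p
    simp only [Finset.mem_filter]
    constructor
    · rintro ⟨hp, hc, hv⟩
      have hpsH := (mem_skewHat_iff hhat).mp hp
      have hpe : (p.1 + 1, p.2) ∈ skewCells lam mu := mem_skew_iff.mpr (by simp; omega)
      have hpos : T (p.1 + 1, p.2) ≠ 0 := (hT.1.1 _).mp hpe
      have hPhi : Phi lamHat mu T p = T (p.1 + 1, p.2) - 1 := if_pos hp
      rw [hPhi] at hv
      exact ⟨hp, by omega, by omega⟩
    · rintro ⟨hp, hc, hv⟩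
      have hpsH := (mem_skewHat_iff hhat).mp hp
      have hpe : (p.1 + 1, p.2) ∈ skewCells lam mu := mem_skew_iff.mpr (by simp; omega)
      have hpos : T (p.1 + 1, p.2) ≠ 0 := (hT.1.1 _).mp hpe
      have hPhi : Phi lamHat mu T p = T (p.1 + 1, p.2) - 1 := if_pos hp
      refine ⟨hp, by omega, ?_⟩
      rw [hPhi]
      omega
  · apply congrArg Finset.card
    ext q
    simp only [Finset.mem_filter]

lemma prefixCount_Psi {lam lamHat mu : YoungDiagram} {S : ℕ × ℕ → ℕ}
    (hhat : ∀ j, lamHat.colLen j = lam.colLen j - 1) (i j m : ℕ) :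
    prefixCount lam mu (Psi lam mu S) (i + 1) j (m + 2)
      = prefixCount lamHat mu S i j (m + 1) := by
  have hnontop : ∀ q ∈ skewCells lam mu, Psi lam mu S q = m + 2 → mu.colLen q.2 < q.1 := by
    intro q hq hTv
    have hms := mem_skew_iff.mp hq
    rcases Nat.lt_or_ge (mu.colLen q.2) q.1 with h | h
    · exact h
    · exfalso
      have hq1 : q.1 = mu.colLen q.2 := by omega
      have : Psi lam mu S q = 1 := by rw [Psi, if_pos hq, if_pos hq1]
      omega
  unfold prefixCount
  have key := card_shift hhat (Psi lam mu S)
    (fun q => q.1 < i + 1 ∨ (q.1 = i + 1 ∧ j ≤ q.2)) m hnontop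
  refine Eq.trans (Eq.trans ?_ key.symm) ?_
  · apply congrArg Finset.card
    ext q
    simp only [Finset.mem_filter]
  · apply congrArg Finset.card
    ext p
    simp only [Finset.mem_filter]
    constructor
    · rintro ⟨hp, hc, hv⟩
      have hpsH := (mem_skewHat_iff hhat).mp hp
      have hpe : (p.1 + 1, p.2) ∈ skewCells lam mu := mem_skew_iff.mpr (by simp; omega)
      have hPsi : Psi lam mu S (p.1 + 1, p.2) = S p + 1 := by
        rw [Psi]
        rw [if_pos hpe, if_neg (by simp; omega),
          show (p.1 + 1 - 1, p.2) = p from Prod.ext (by simp) rfl]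
      rw [hPsi] at hv
      exact ⟨hp, by omega, by omega⟩
    · rintro ⟨hp, hc, hv⟩
      have hpsH := (mem_skewHat_iff hhat).mp hp
      have hpe : (p.1 + 1, p.2) ∈ skewCells lam mu := mem_skew_iff.mpr (by simp; omega)
      have hPsi : Psi lam mu S (p.1 + 1, p.2) = S p + 1 := by
        rw [Psi]
        rw [if_pos hpe, if_neg (by simp; omega),
          show (p.1 + 1 - 1, p.2) = p from Prod.ext (by simp) rfl]
      refine ⟨hp, by omega, ?_⟩
      rw [hPsi]
      omega

lemma Phi_mem {lamHat mu : YoungDiagram} {T : ℕ × ℕ → ℕ} {i j : ℕ}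
    (hp : (i, j) ∈ skewCells lamHat mu) :
    Phi lamHat mu T (i, j) = T (i + 1, j) - 1 := by
  simp only [Phi]
  rw [if_pos hp]

lemma Phi_notmem {lamHat mu : YoungDiagram} {T : ℕ × ℕ → ℕ} {p : ℕ × ℕ}
    (hp : p ∉ skewCells lamHat mu) : Phi lamHat mu T p = 0 := by
  simp only [Phi]
  rw [if_neg hp]

lemma Psi_top {lam mu : YoungDiagram} {S : ℕ × ℕ → ℕ} {i j : ℕ}
    (hp : (i, j) ∈ skewCells lam mu) (h : i = mu.colLen j) :
    Psi lam mu S (i, j) = 1 := by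
  simp only [Psi]
  rw [if_pos hp, if_pos h]

lemma Psi_nontop {lam mu : YoungDiagram} {S : ℕ × ℕ → ℕ} {i j : ℕ}
    (hp : (i, j) ∈ skewCells lam mu) (h : ¬ i = mu.colLen j) :
    Psi lam mu S (i, j) = S (i - 1, j) + 1 := by
  simp only [Psi]
  rw [if_pos hp, if_neg h]

lemma Psi_notmem {lam mu : YoungDiagram} {S : ℕ × ℕ → ℕ} {p : ℕ × ℕ}
    (hp : p ∉ skewCells lam mu) : Psi lam mu S p = 0 := by
  simp only [Psi]
  rw [if_neg hp]

lemma content_eq_prefix {a b : YoungDiagram} (T : ℕ × ℕ → ℕ) (k N : ℕ)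
    (hN : ∀ p ∈ skewCells a b, p.1 < N) :
    content a b T k = prefixCount a b T N 0 k := by
  unfold content prefixCount
  apply congrArg Finset.card
  ext p
  simp only [Finset.mem_filter]
  constructor
  · rintro ⟨hp, hv⟩
    exact ⟨hp, Or.inl (hN p hp), hv⟩
  · rintro ⟨hp, _, hv⟩
    exact ⟨hp, hv⟩

lemma skew_bound {lam mu : YoungDiagram} :
    ∀ p ∈ skewCells lam mu, p.1 < lam.colLen 0 + 1 := by
  intro p hp
  have h := mem_skew_iff.mp hp
  have := lam.colLen_anti 0 p.2 (Nat.zero_le _)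
  omega

lemma skewHat_bound {lam lamHat mu : YoungDiagram}
    (hhat : ∀ j, lamHat.colLen j = lam.colLen j - 1) :
    ∀ p ∈ skewCells lamHat mu, p.1 < lam.colLen 0 := by
  intro p hp
  have h := (mem_skewHat_iff hhat).mp hp
  have := lam.colLen_anti 0 p.2 (Nat.zero_le _)
  omega

lemma content_Phi {lam lamHat mu nu : YoungDiagram} {T : ℕ × ℕ → ℕ}
    (hhat : ∀ j, lamHat.colLen j = lam.colLen j - 1)
    (hnu1 : nu.rowLen 0 = lam.rowLen 0) (hT : IsLR lam mu nu T) (k : ℕ) :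
    content lamHat mu (Phi lamHat mu T) (k + 1) = content lam mu T (k + 2) := by
  rw [content_eq_prefix _ _ (lam.colLen 0) (skewHat_bound hhat),
    content_eq_prefix _ _ (lam.colLen 0 + 1) skew_bound]
  exact prefixCount_Phi hhat hnu1 hT (lam.colLen 0) 0 k

lemma content_Psi {lam lamHat mu : YoungDiagram} (S : ℕ × ℕ → ℕ)
    (hhat : ∀ j, lamHat.colLen j = lam.colLen j - 1) (k : ℕ) :
    content lam mu (Psi lam mu S) (k + 2) = content lamHat mu S (k + 1) := by
  rw [content_eq_prefix _ _ (lam.colLen 0 + 1) skew_bound,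
    content_eq_prefix _ _ (lam.colLen 0) (skewHat_bound hhat)]
  exact prefixCount_Psi hhat (lam.colLen 0) 0 k

lemma prefix_two_le_one {lam mu : YoungDiagram} {T : ℕ × ℕ → ℕ}
    (hcol : ∀ i1 i2 j, (i1, j) ∈ skewCells lam mu → (i2, j) ∈ skewCells lam mu → i1 < i2 →
      T (i1, j) < T (i2, j))
    (htop : ∀ j, mu.colLen j < lam.colLen j → T (mu.colLen j, j) = 1)
    (i j : ℕ) :
    prefixCount lam mu T i j 2 ≤ prefixCount lam mu T i j 1 := by
  apply Finset.card_le_card_of_injOn (fun q => (mu.colLen q.2, q.2))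
  · intro q hq
    rw [Finset.mem_coe, Finset.mem_filter] at hq; rw [Finset.mem_coe, Finset.mem_filter]
    obtain ⟨hqs, hc, hv⟩ := hq
    have hms := mem_skew_iff.mp hqs
    have hnt : mu.colLen q.2 < q.1 := by
      rcases Nat.lt_or_ge (mu.colLen q.2) q.1 with h | h
      · exact h
      · exfalso
        have h1 : q.1 = mu.colLen q.2 := by omega
        have := htop q.2 (by omega)
        rw [show (mu.colLen q.2, q.2) = q from Prod.ext h1.symm rfl] at this
        omega
    refine ⟨mem_skew_iff.mpr (by simp; omega), ?_, htop q.2 (by omega)⟩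
    simp only
    left
    omega
  · intro q hq q' hq' h
    simp only [Finset.mem_coe, Finset.mem_filter] at hq hq'
    simp only [Prod.mk.injEq] at h
    have h2 : q.2 = q'.2 := h.2
    by_contra hne
    have hne1 : q.1 ≠ q'.1 := fun hh => hne (Prod.ext hh h2)
    have key : ∀ a b : ℕ × ℕ, a ∈ skewCells lam mu → T a = 2 → b ∈ skewCells lam mu →
        T b = 2 → a.2 = b.2 → a.1 < b.1 → False := by
      intro a b has hav hbs hbv hab hlt
      have := hcol a.1 b.1 a.2 (by rw [show (a.1, a.2) = a from rfl]; exact has)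
        (by rw [show (b.1, a.2) = b from Prod.ext rfl hab]; exact hbs) hlt
      rw [show (a.1, a.2) = a from rfl, show (b.1, a.2) = b from Prod.ext rfl hab] at this
      omega
    rcases lt_or_gt_of_ne hne1 with hlt | hlt
    · exact key q q' hq.1 hq.2.2 hq'.1 hq'.2.2 h2 hlt
    · exact key q' q hq'.1 hq'.2.2 hq.1 hq.2.2 h2.symm hlt

lemma ssyt_Phi {lam lamHat mu nu : YoungDiagram} {T : ℕ × ℕ → ℕ}
    (hhat : ∀ j, lamHat.colLen j = lam.colLen j - 1)
    (hnu1 : nu.rowLen 0 = lam.rowLen 0) (hT : IsLR lam mu nu T) :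
    IsSSYT lamHat mu (Phi lamHat mu T) := by
  refine ⟨?_, ?_, ?_⟩
  · rintro ⟨a, b⟩
    constructor
    · intro hp
      have hpsH := (mem_skewHat_iff hhat).mp hp
      simp only at hpsH
      have hpe : (a + 1, b) ∈ skewCells lam mu := mem_skew_iff.mpr (by simp; omega)
      have h2 : 2 ≤ T (a + 1, b) := nontop_ge_two hnu1 hT _ hpe (by simp; omega)
      rw [Phi_mem hp]
      omega
    · intro hne
      by_contra hp
      exact hne (Phi_notmem hp)
  · intro i j1 j2 h1 h2 hj
    have hm1 := (mem_skewHat_iff hhat).mp h1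
    have hm2 := (mem_skewHat_iff hhat).mp h2
    simp only at hm1 hm2
    have he1 : (i + 1, j1) ∈ skewCells lam mu := mem_skew_iff.mpr (by simp; omega)
    have he2 : (i + 1, j2) ∈ skewCells lam mu := mem_skew_iff.mpr (by simp; omega)
    have hrow := hT.1.2.1 (i + 1) j1 j2 he1 he2 hj
    rw [Phi_mem h1, Phi_mem h2]
    omega
  · intro i1 i2 j h1 h2 hlt
    have hm1 := (mem_skewHat_iff hhat).mp h1
    have hm2 := (mem_skewHat_iff hhat).mp h2
    simp only at hm1 hm2
    have he1 : (i1 + 1, j) ∈ skewCells lam mu := mem_skew_iff.mpr (by simp; omega)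
    have he2 : (i2 + 1, j) ∈ skewCells lam mu := mem_skew_iff.mpr (by simp; omega)
    have hcol := hT.1.2.2 (i1 + 1) (i2 + 1) j he1 he2 (by omega)
    have hge : 2 ≤ T (i1 + 1, j) := nontop_ge_two hnu1 hT _ he1 (by simp; omega)
    rw [Phi_mem h1, Phi_mem h2]
    omega

lemma ssyt_Psi {lam lamHat mu : YoungDiagram} {S : ℕ × ℕ → ℕ}
    (hhat : ∀ j, lamHat.colLen j = lam.colLen j - 1)
    (hS : IsSSYT lamHat mu S) : IsSSYT lam mu (Psi lam mu S) := by
  refine ⟨?_, ?_, ?_⟩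
  · rintro ⟨a, b⟩
    constructor
    · intro hp
      by_cases h : a = mu.colLen b
      · rw [Psi_top hp h]; omega
      · rw [Psi_nontop hp h]; omega
    · intro hne
      by_contra hp
      exact hne (Psi_notmem hp)
  · intro i j1 j2 h1 h2 hj
    have hm1 := mem_skew_iff.mp h1
    have hm2 := mem_skew_iff.mp h2
    simp only at hm1 hm2
    by_cases ht1 : i = mu.colLen j1
    · rw [Psi_top h1 ht1]
      by_cases ht2 : i = mu.colLen j2
      · rw [Psi_top h2 ht2]
      · rw [Psi_nontop h2 ht2]
        omega
    · by_cases ht2 : i = mu.colLen j2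
      · exfalso
        have := mu.colLen_anti j1 j2 hj
        omega
      · rw [Psi_nontop h1 ht1, Psi_nontop h2 ht2]
        have hh1 : (i - 1, j1) ∈ skewCells lamHat mu :=
          (mem_skewHat_iff hhat).mpr (by simp; omega)
        have hh2 : (i - 1, j2) ∈ skewCells lamHat mu :=
          (mem_skewHat_iff hhat).mpr (by simp; omega)
        have := hS.2.1 (i - 1) j1 j2 hh1 hh2 hj
        omega
  · intro i1 i2 j h1 h2 hlt
    have hm1 := mem_skew_iff.mp h1
    have hm2 := mem_skew_iff.mp h2
    simp only at hm1 hm2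
    have ht2 : ¬ i2 = mu.colLen j := by omega
    rw [Psi_nontop h2 ht2]
    by_cases ht1 : i1 = mu.colLen j
    · rw [Psi_top h1 ht1]
      have hh2 : (i2 - 1, j) ∈ skewCells lamHat mu :=
        (mem_skewHat_iff hhat).mpr (by simp; omega)
      have := (hS.1 _).mp hh2
      omega
    · rw [Psi_nontop h1 ht1]
      have hh1 : (i1 - 1, j) ∈ skewCells lamHat mu :=
        (mem_skewHat_iff hhat).mpr (by simp; omega)
      have hh2 : (i2 - 1, j) ∈ skewCells lamHat mu :=
        (mem_skewHat_iff hhat).mpr (by simp; omega)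
      have := hS.2.2 (i1 - 1) (i2 - 1) j hh1 hh2 (by omega)
      omega

lemma lattice_Phi {lam lamHat mu nu : YoungDiagram} {T : ℕ × ℕ → ℕ}
    (hhat : ∀ j, lamHat.colLen j = lam.colLen j - 1)
    (hnu1 : nu.rowLen 0 = lam.rowLen 0) (hT : IsLR lam mu nu T) :
    IsLattice lamHat mu (Phi lamHat mu T) := by
  intro i j k
  show prefixCount lamHat mu (Phi lamHat mu T) i j ((k + 1) + 1)
    ≤ prefixCount lamHat mu (Phi lamHat mu T) i j (k + 1)
  rw [prefixCount_Phi hhat hnu1 hT i j (k + 1), prefixCount_Phi hhat hnu1 hT i j k]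
  exact hT.2.1 (i + 1) j (k + 1)

lemma lattice_Psi {lam lamHat mu : YoungDiagram} {S : ℕ × ℕ → ℕ}
    (hhat : ∀ j, lamHat.colLen j = lam.colLen j - 1)
    (hS : IsSSYT lamHat mu S) (hlat : IsLattice lamHat mu S) :
    IsLattice lam mu (Psi lam mu S) := by
  have hssyt := ssyt_Psi hhat hS
  intro i j k
  match k with
  | 0 =>
    apply prefix_two_le_one hssyt.2.2
    intro j' hj'
    exact Psi_top (mem_skew_iff.mpr (by simp; omega)) rfl
  | Nat.succ k =>
    match i with
    | 0 =>
      have hzero : prefixCount lam mu (Psi lam mu S) 0 j (k + 1 + 2) = 0 := by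
        rw [prefixCount, Finset.card_eq_zero, Finset.filter_eq_empty_iff]
        intro p hp hcond
        obtain ⟨hc, hv⟩ := hcond
        have hms := mem_skew_iff.mp hp
        have h0 : p.1 = 0 := by
          rcases hc with h | h
          · omega
          · exact h.1
        have htopeq : p.1 = mu.colLen p.2 := by omega
        have : Psi lam mu S p = 1 := by
          rw [show p = (p.1, p.2) from rfl] at hp ⊢
          exact Psi_top hp htopeq
        omega
      rw [show (k + 1) + 2 = k + 1 + 2 from rfl, hzero]
      exact Nat.zero_le _
    | Nat.succ i =>
      show prefixCount lam mu (Psi lam mu S) (i + 1) j ((k + 1) + 2)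
        ≤ prefixCount lam mu (Psi lam mu S) (i + 1) j ((k) + 2)
      rw [prefixCount_Psi hhat i j (k + 1), prefixCount_Psi hhat i j k]
      exact hlat i j k

lemma content_Psi_one {lam lamHat mu : YoungDiagram} {S : ℕ × ℕ → ℕ}
    (hhat : ∀ j, lamHat.colLen j = lam.colLen j - 1)
    (hbasic : IsBasic lam mu) (hS : IsSSYT lamHat mu S) :
    content lam mu (Psi lam mu S) 1 = lam.rowLen 0 := by
  rw [content, ← Finset.card_range (lam.rowLen 0)]
  apply Finset.card_bij' (fun p _ => p.2) (fun j _ => (mu.colLen j, j))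
  · intro p hp
    rw [Finset.mem_filter] at hp
    have hms := mem_skew_iff.mp hp.1
    have hmem : (p.1, p.2) ∈ lam := YoungDiagram.mem_iff_lt_colLen.mpr hms.2
    have hlt : p.2 < lam.rowLen p.1 := YoungDiagram.mem_iff_lt_rowLen.mp hmem
    exact Finset.mem_range.mpr (lt_of_lt_of_le hlt (lam.rowLen_anti 0 p.1 (Nat.zero_le _)))
  · intro j hj
    rw [Finset.mem_range] at hj
    have hcol : mu.colLen j < lam.colLen j := hbasic.2 j hj
    have hmem : (mu.colLen j, j) ∈ skewCells lam mu := mem_skew_iff.mpr (by simp; omega)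
    rw [Finset.mem_filter]
    exact ⟨hmem, Psi_top hmem rfl⟩
  · intro p hp
    rw [Finset.mem_filter] at hp
    obtain ⟨hps, hv⟩ := hp
    have hms := mem_skew_iff.mp hps
    have htopeq : p.1 = mu.colLen p.2 := by
      by_contra hne
      have hlt : mu.colLen p.2 < p.1 := by omega
      have hpH : (p.1 - 1, p.2) ∈ skewCells lamHat mu :=
        (mem_skewHat_iff hhat).mpr (by simp; omega)
      have hSne : S (p.1 - 1, p.2) ≠ 0 := (hS.1 _).mp hpH
      have : Psi lam mu S p = S (p.1 - 1, p.2) + 1 := by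
        rw [show p = (p.1, p.2) from rfl] at hps ⊢
        exact Psi_nontop hps hne
      omega
    exact Prod.ext htopeq.symm rfl
  · intro j hj
    rfl

lemma Psi_Phi {lam lamHat mu nu : YoungDiagram} {T : ℕ × ℕ → ℕ}
    (hhat : ∀ j, lamHat.colLen j = lam.colLen j - 1)
    (hnu1 : nu.rowLen 0 = lam.rowLen 0) (hT : IsLR lam mu nu T) :
    Psi lam mu (Phi lamHat mu T) = T := by
  funext p
  obtain ⟨a, b⟩ := p
  by_cases hp : (a, b) ∈ skewCells lam mu
  · have hms := mem_skew_iff.mp hp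
    simp only at hms
    by_cases htop : a = mu.colLen b
    · rw [Psi_top hp htop]
      have := tops_one hnu1 hT b (by omega)
      rw [show (mu.colLen b, b) = (a, b) from Prod.ext htop.symm rfl] at this
      omega
    · rw [Psi_nontop hp htop]
      have hpH : (a - 1, b) ∈ skewCells lamHat mu :=
        (mem_skewHat_iff hhat).mpr (by simp; omega)
      rw [Phi_mem hpH, show a - 1 + 1 = a from by omega]
      have h2 : 2 ≤ T (a, b) := nontop_ge_two hnu1 hT _ hp (by simp; omega)
      omega
  · rw [Psi_notmem hp]
    have : T (a, b) = 0 := by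
      by_contra hne
      exact hp ((hT.1.1 _).mpr hne)
    omega

lemma Phi_Psi {lam lamHat mu : YoungDiagram} {S : ℕ × ℕ → ℕ}
    (hhat : ∀ j, lamHat.colLen j = lam.colLen j - 1)
    (hS : IsSSYT lamHat mu S) :
    Phi lamHat mu (Psi lam mu S) = S := by
  funext p
  obtain ⟨a, b⟩ := p
  by_cases hp : (a, b) ∈ skewCells lamHat mu
  · have hpsH := (mem_skewHat_iff hhat).mp hp
    simp only at hpsH
    have hpe : (a + 1, b) ∈ skewCells lam mu := mem_skew_iff.mpr (by simp; omega)
    rw [Phi_mem hp, Psi_nontop hpe (by omega), show a + 1 - 1 = a from by omega]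
    omega
  · rw [Phi_notmem hp]
    have : S (a, b) = 0 := by
      by_contra hne
      exact hp ((hS.1 _).mpr hne)
    omega


/-- removing the top box of every column gives a skew diagram `lamHat/mu`, and
LR tableaux of `lam/mu` with maximal first part of the content `nu_1 = lam_1` correspond to
LR tableaux of `lamHat/mu` with content `(nu_2, nu_3, …)`. -/
theorem lrCoeff_remove_top_boxes (lam mu : YoungDiagram) (hmu : mu ≤ lam)
    (hbasic : IsBasic lam mu)
    (lamHat : YoungDiagram) (hhat : ∀ j, lamHat.colLen j = lam.colLen j - 1)
    (nu nuHat : YoungDiagram) (hnu1 : nu.rowLen 0 = lam.rowLen 0)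
    (hnuHat : ∀ i, nuHat.rowLen i = nu.rowLen (i + 1)) :
    mu ≤ lamHat ∧ lrCoeff lam mu nu = lrCoeff lamHat mu nuHat := by
  have hmuHat : mu ≤ lamHat := by
    rw [← YoungDiagram.cells_subset_iff]
    intro p hp
    obtain ⟨a, b⟩ := p
    rw [YoungDiagram.mem_cells] at hp ⊢
    rw [YoungDiagram.mem_iff_lt_colLen] at hp ⊢
    have h0 : (0, b) ∈ mu := YoungDiagram.mem_iff_lt_colLen.mpr (by omega)
    have h0' : (0, b) ∈ lam := by
      rw [← YoungDiagram.mem_cells] at h0 ⊢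
      exact hmu h0
    have hjlt : b < lam.rowLen 0 := YoungDiagram.mem_iff_lt_rowLen.mp h0'
    have hcl : mu.colLen b < lam.colLen b := hbasic.2 b hjlt
    rw [hhat]
    omega
  refine ⟨hmuHat, ?_⟩
  rw [lrCoeff, lrCoeff, if_pos hmu, if_pos hmuHat]
  have hmapsto : Set.MapsTo (Phi lamHat mu)
      {T | IsLR lam mu nu T} {S | IsLR lamHat mu nuHat S} := by
    intro T hT
    rw [Set.mem_setOf_eq] at hT ⊢
    refine ⟨ssyt_Phi hhat hnu1 hT, lattice_Phi hhat hnu1 hT, ?_⟩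
    intro i
    calc content lamHat mu (Phi lamHat mu T) (i + 1) = content lam mu T (i + 2) :=
          content_Phi hhat hnu1 hT i
      _ = nu.rowLen (i + 1) := hT.2.2 (i + 1)
      _ = nuHat.rowLen i := (hnuHat i).symm
  have hmapsto' : Set.MapsTo (Psi lam mu)
      {S | IsLR lamHat mu nuHat S} {T | IsLR lam mu nu T} := by
    intro S hS
    rw [Set.mem_setOf_eq] at hS ⊢
    refine ⟨ssyt_Psi hhat hS.1, lattice_Psi hhat hS.1 hS.2.1, ?_⟩
    intro i
    match i with
    | 0 =>
      calc content lam mu (Psi lam mu S) 1 = lam.rowLen 0 :=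
            content_Psi_one hhat hbasic hS.1
        _ = nu.rowLen 0 := hnu1.symm
    | Nat.succ i =>
      calc content lam mu (Psi lam mu S) (i + 1 + 1) = content lamHat mu S (i + 1) :=
            content_Psi S hhat i
        _ = nuHat.rowLen i := hS.2.2 i
        _ = nu.rowLen (i + 1) := hnuHat i
  have hbij : Set.BijOn (Phi lamHat mu)
      {T | IsLR lam mu nu T} {S | IsLR lamHat mu nuHat S} := by
    apply Set.InvOn.bijOn _ hmapsto hmapsto'
    constructor
    · intro T hT
      rw [Set.mem_setOf_eq] at hT
      exact Psi_Phi hhat hnu1 hT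
    · intro S hS
      rw [Set.mem_setOf_eq] at hS
      exact Phi_Psi hhat hS.1
  rw [← hbij.image_eq, Set.ncard_image_of_injOn hbij.injOn]

end LRSkew
end
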